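/- Let G be a connected graph containing a cycle, with girth g(G). If rc(G) < g(G) - 2, then prc(G) = rc(G). -/

import Mathlib

open SimpleGraph

variable {V : Type*}

/-- A walk is rainbow under edge colouring `c` if its edges receive pairwise distinct colours. -/
def SimpleGraph.Walk.IsRainbow {G : SimpleGraph V} {u v : V} (c : Sym2 V → ℕ) (p : G.Walk u v) :
    Prop :=
  (p.edges.map c).Nodup

/-- `G` is rainbow connected under the edge colouring `c`: any two vertices are joined by a
rainbow path. -/
def SimpleGraph.RainbowConnected (G : SimpleGraph V) (c : Sym2 V → ℕ) : Prop :=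
  ∀ u v : V, ∃ p : G.Walk u v, p.IsPath ∧ p.IsRainbow c

/-- `c` is a proper edge colouring of `G`: adjacent edges receive distinct colours. -/
def SimpleGraph.IsProperEdgeColoring (G : SimpleGraph V) (c : Sym2 V → ℕ) : Prop :=
  ∀ ⦃u v w : V⦄, G.Adj u v → G.Adj u w → v ≠ w → c s(u, v) ≠ c s(u, w)

/-- The colouring `c` uses at most `k` colours on the edges of `G`. -/
def SimpleGraph.ColorsLE (G : SimpleGraph V) (c : Sym2 V → ℕ) (k : ℕ) : Prop :=
  ∀ e ∈ G.edgeSet, c e < k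

/-- The rainbow connection number `rc(G)`. -/
noncomputable def SimpleGraph.rcNumber (G : SimpleGraph V) : ℕ :=
  sInf {k | ∃ c : Sym2 V → ℕ, G.ColorsLE c k ∧ G.RainbowConnected c}

/-- The proper rainbow connection number `prc(G)`. -/
noncomputable def SimpleGraph.prcNumber (G : SimpleGraph V) : ℕ :=
  sInf {k | ∃ c : Sym2 V → ℕ, G.ColorsLE c k ∧ G.IsProperEdgeColoring c ∧ G.RainbowConnected c}

/-- The chromatic index `χ'(G)`. -/
noncomputable def SimpleGraph.chromaticIndex (G : SimpleGraph V) : ℕ :=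
  sInf {k | ∃ c : Sym2 V → ℕ, G.ColorsLE c k ∧ G.IsProperEdgeColoring c}

/-- Any cycle bounds the girth. -/
lemma girth_le_of_isCycle {G : SimpleGraph V} {a : V} {w : G.Walk a a} (hw : w.IsCycle) :
    G.girth ≤ w.length := by
  have h : G.egirth ≤ (w.length : ℕ∞) :=
    iInf_le_of_le a (iInf_le_of_le w (iInf_le _ hw))
  have := ENat.toNat_le_toNat h (by simp : (w.length : ℕ∞) ≠ ⊤)
  simpa [SimpleGraph.girth] using this

/-- A short path from a vertex to one of its neighbours must be the single edge. -/
lemma edges_eq_single_of_short {G : SimpleGraph V} {a b : V} (hab : G.Adj a b)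
    {q : G.Walk b a} (hq : q.IsPath) (hlen : q.length + 1 < G.girth) :
    q.edges = [s(b, a)] := by
  cases q with
  | nil => exact absurd rfl hab.ne'
  | @cons _ x _ h q1 =>
    by_cases hxa : x = a
    · subst hxa
      have hnil : q1 = SimpleGraph.Walk.nil := (SimpleGraph.Walk.isPath_iff_eq_nil (p := q1)).mp hq.of_cons
      subst hnil
      simp
    · exfalso
      have hmem : s(a, b) ∉ (SimpleGraph.Walk.cons h q1).edges := by
        rw [SimpleGraph.Walk.edges_cons, List.mem_cons]
        rintro (hm | hm)
        · rw [Sym2.eq_iff] at hm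
          rcases hm with ⟨h1, h2⟩ | ⟨h1, -⟩
          · exact hab.ne h1
          · exact hxa h1.symm
        · have hb := SimpleGraph.Walk.snd_mem_support_of_mem_edges _ hm
          rw [SimpleGraph.Walk.cons_isPath_iff] at hq
          exact hq.2 hb
      have hc : (SimpleGraph.Walk.cons hab (SimpleGraph.Walk.cons h q1)).IsCycle :=
        (SimpleGraph.Walk.cons_isCycle_iff _ _).mpr ⟨hq, hmem⟩
      have := girth_le_of_isCycle hc
      simp only [SimpleGraph.Walk.length_cons] at this hlen
      omega

/-- A rainbow walk whose colours are `< k` has length at most `k`. -/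
lemma length_le_of_rainbow {G : SimpleGraph V} {c : Sym2 V → ℕ} {k : ℕ}
    (hc : G.ColorsLE c k) {u v : V} {p : G.Walk u v} (hp : p.IsRainbow c) :
    p.length ≤ k := by
  classical
  have hnd : (p.edges.map c).Nodup := hp
  have hsub : (p.edges.map c).toFinset ⊆ Finset.range k := by
    intro x hx
    simp only [List.mem_toFinset, List.mem_map] at hx
    obtain ⟨e, he, rfl⟩ := hx
    exact Finset.mem_range.mpr (hc e (p.edges_subset_edgeSet he))
  have := Finset.card_le_card hsub
  rwa [List.toFinset_card_of_nodup hnd, Finset.card_range, List.length_map,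
    p.length_edges] at this

theorem stmt7 {V : Type*} [Fintype V] (G : SimpleGraph V) (hconn : G.Connected)
    (hcyc : ¬ G.IsAcyclic) (hrc : G.rcNumber < G.girth - 2) :
    G.prcNumber = G.rcNumber := by
  classical
  set S : Set ℕ := {k | ∃ c : Sym2 V → ℕ, G.ColorsLE c k ∧ G.RainbowConnected c} with hS
  have hSne : S.Nonempty := by
    refine ⟨Fintype.card (Sym2 V), fun e => ((Fintype.equivFin (Sym2 V)) e : ℕ), ?_, ?_⟩
    · intro e _; exact ((Fintype.equivFin (Sym2 V)) e).isLt
    · intro u v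
      obtain ⟨w⟩ := hconn u v
      refine ⟨w.bypass, w.bypass_isPath, ?_⟩
      exact (w.bypass_isPath.edges_nodup).map
        (fun a b hab => (Fintype.equivFin (Sym2 V)).injective (Fin.val_injective hab))
  set k := G.rcNumber with hk
  obtain ⟨c, hcle, hcrb⟩ : k ∈ S := Nat.sInf_mem hSne
  have hg3 : 3 ≤ G.girth := G.three_le_girth hcyc
  -- the colouring c is proper
  have hproper : G.IsProperEdgeColoring c := by
    rintro u v w huv huw hvw heq
    obtain ⟨p, hp, hprb⟩ := hcrb v w
    have hplen : p.length ≤ k := length_le_of_rainbow hcle hprb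
    by_cases hu : u ∈ p.support
    · -- split the path at u
      have hspec := p.take_spec hu
      have hp1 : (p.takeUntil u hu).IsPath := hp.takeUntil hu
      have hp2 : (p.dropUntil u hu).IsPath := hp.dropUntil hu
      have hlen1 : (p.takeUntil u hu).length ≤ p.length := p.length_takeUntil_le hu
      have hlen2 : (p.dropUntil u hu).length ≤ p.length := p.length_dropUntil_le hu
      have he1 : (p.takeUntil u hu).edges = [s(v, u)] :=
        edges_eq_single_of_short huv hp1 (by omega)
      have he2 : (p.dropUntil u hu).edges = [s(u, w)] :=
        edges_eq_single_of_short huw.symm hp2 (by omega)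
      have hedges : p.edges = [s(v, u), s(u, w)] := by
        rw [← hspec, SimpleGraph.Walk.edges_append, he1, he2]; rfl
      have hnd : (p.edges.map c).Nodup := hprb
      rw [hedges] at hnd
      simp only [List.map_cons, List.map_nil, List.nodup_cons, List.mem_cons,
        List.mem_singleton, List.not_mem_nil] at hnd
      refine hnd.1 (Or.inl ?_)
      rw [Sym2.eq_swap (a := v) (b := u)]
      exact heq
    · -- u not on p : build a cycle u-v-...-w-u
      have hrp : p.reverse.IsPath := hp.reverse
      have hr : (SimpleGraph.Walk.cons huw p.reverse).IsPath := by
        rw [SimpleGraph.Walk.cons_isPath_iff]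
        refine ⟨hrp, ?_⟩
        rwa [SimpleGraph.Walk.support_reverse, List.mem_reverse]
      have hcyc' : (SimpleGraph.Walk.cons huv.symm
          (SimpleGraph.Walk.cons huw p.reverse)).IsCycle := by
        rw [SimpleGraph.Walk.cons_isCycle_iff]
        refine ⟨hr, ?_⟩
        intro hmem
        rw [SimpleGraph.Walk.edges_cons, List.mem_cons] at hmem
        rcases hmem with hmem | hmem
        · rw [Sym2.eq_iff] at hmem
          rcases hmem with ⟨h1, -⟩ | ⟨h1, -⟩
          · exact huv.ne' h1
          · exact hvw h1
        · have := SimpleGraph.Walk.snd_mem_support_of_mem_edges _ hmem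
          rw [SimpleGraph.Walk.support_reverse, List.mem_reverse] at this
          exact hu this
      have hle := girth_le_of_isCycle hcyc'
      simp only [SimpleGraph.Walk.length_cons, SimpleGraph.Walk.length_reverse] at hle
      omega
  have hkprc : k ∈ {k | ∃ c : Sym2 V → ℕ, G.ColorsLE c k ∧ G.IsProperEdgeColoring c ∧
      G.RainbowConnected c} := ⟨c, hcle, hproper, hcrb⟩
  have h1 : G.prcNumber ≤ k := Nat.sInf_le hkprc
  have h2 : k ≤ G.prcNumber := by
    have hmem := Nat.sInf_mem ⟨k, hkprc⟩
    obtain ⟨c', hc'le, _, hc'rb⟩ := hmem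
    exact Nat.sInf_le ⟨c', hc'le, hc'rb⟩
  omega
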